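/- For every integer n ≥ 4, every 2-coloring c of the pairs (i,j) with 1 ≤ i < j ≤ n, and every integer k with 0 ≤ k ≤ ⌊n/2⌋−2, the identity E_{≤≤k}(c) = E_{≤≤k−1}(c₁) + 2·binom(k+2,2) + E_{≤k}(c,c₁) holds, where c₁ is the restriction of c to the pairs (i,j) with 1 ≤ i < j ≤ n−1. -/

import Mathlib

/-- Number of crossings of a 2-page book drawing of `K n`, encoded as a
2-coloring `c` of the pairs `(i,j)` with `1 ≤ i < j ≤ n` (edge `ij` is drawn in the
page given by `c i j`).  Edges `(i,j)` and `(k,l)` cross iff `i < k < j < l` and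
they have the same color. -/
def crossings (n : ℕ) (c : ℕ → ℕ → Bool) : ℕ :=
  ((((Finset.Icc 1 n) ×ˢ (Finset.Icc 1 n)) ×ˢ ((Finset.Icc 1 n) ×ˢ (Finset.Icc 1 n))).filter
    (fun p => p.1.1 < p.2.1 ∧ p.2.1 < p.1.2 ∧ p.1.2 < p.2.2 ∧
      c p.1.1 p.1.2 = c p.2.1 p.2.2)).card

/-- The Hill/Guy quantity `Z n = (1/4)⌊n/2⌋⌊(n-1)/2⌋⌊(n-2)/2⌋⌊(n-3)/2⌋`. -/
def Z (n : ℕ) : ℕ := (n / 2) * ((n - 1) / 2) * ((n - 2) / 2) * ((n - 3) / 2) / 4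

/-- `s(i,j)`: the number of `l < i` with `c l j = c i j` plus the number of
`j < l ≤ n` with `c i l = c i j`. -/
def sDeg (n : ℕ) (c : ℕ → ℕ → Bool) (i j : ℕ) : ℕ :=
  ((Finset.Ico 1 i).filter (fun l => c l j = c i j)).card +
  ((Finset.Ioc j n).filter (fun l => c i l = c i j)).card

/-- The edge `(i,j)` is a `kVal n c i j`-edge: `min (s(i,j), n - 2 - s(i,j))`. -/
def kVal (n : ℕ) (c : ℕ → ℕ → Bool) (i j : ℕ) : ℕ :=
  min (sDeg n c i j) (n - 2 - sDeg n c i j)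

/-- `E_k(c)`: the number of `k`-edges of `c`. -/
def Ek (n : ℕ) (c : ℕ → ℕ → Bool) (k : ℕ) : ℕ :=
  (((Finset.Icc 1 n) ×ˢ (Finset.Icc 1 n)).filter
    (fun p => p.1 < p.2 ∧ kVal n c p.1 p.2 = k)).card

/-- `E_{≤k}(c) = Σ_{j=0}^{k} E_j(c)`. -/
def Eleq (n : ℕ) (c : ℕ → ℕ → Bool) (k : ℕ) : ℕ :=
  ∑ j ∈ Finset.range (k + 1), Ek n c j

/-- `E_{≤≤k}(c) = Σ_{j=0}^{k} E_{≤j}(c)`. -/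
def Eleqleq (n : ℕ) (c : ℕ → ℕ → Bool) (k : ℕ) : ℕ :=
  ∑ j ∈ Finset.range (k + 1), Eleq n c j

/-- `E_{≤k}(c, c₁)`: the number of `(c,c₁)`-invariant `(≤ k)`-edges, where `c₁` is the
restriction of `c` to `K_{n-1}` (deleting the rightmost vertex `n`): edges `(i,j)` with
`j ≤ n - 1` that are `j'`-edges of both `c` (in `K_n`) and `c₁` (in `K_{n-1}`) for some `j' ≤ k`. -/
def EleqInv (n : ℕ) (c : ℕ → ℕ → Bool) (k : ℕ) : ℕ :=
  (((Finset.Icc 1 (n - 1)) ×ˢ (Finset.Icc 1 (n - 1))).filter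
    (fun p => p.1 < p.2 ∧ kVal n c p.1 p.2 = kVal (n - 1) c p.1 p.2 ∧
      kVal n c p.1 p.2 ≤ k)).card

/-- A 2-coloring is crossing optimal if it minimizes the number of crossings. -/
def IsOptimal (n : ℕ) (c : ℕ → ℕ → Bool) : Prop :=
  ∀ c' : ℕ → ℕ → Bool, crossings n c ≤ crossings n c'

/-- The spine convention: the edges `(i,i+1)` and the edge `(1,n)` are blue (`true`). -/
def SpineConvention (n : ℕ) (c : ℕ → ℕ → Bool) : Prop :=
  (∀ i, 1 ≤ i → i + 1 ≤ n → c i (i + 1) = true) ∧ c 1 n = true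

/-- The cyclic-shift transformation `f`. -/
def fT (n : ℕ) (c : ℕ → ℕ → Bool) : ℕ → ℕ → Bool :=
  fun i j => if j < n then c (i + 1) (j + 1) else c 1 (i + 1)

/-- The vertical-reflection transformation `g`. -/
def gT (n : ℕ) (c : ℕ → ℕ → Bool) : ℕ → ℕ → Bool :=
  fun i j => c (n + 1 - j) (n + 1 - i)

/-- The page-exchange transformation `h` (keeping the spine edges and `(1,n)` fixed). -/
def hT (n : ℕ) (c : ℕ → ℕ → Bool) : ℕ → ℕ → Bool :=
  fun i j => if j = i + 1 ∨ (i = 1 ∧ j = n) then c i j else !(c i j)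

/-- Two colorings are equivalent if `c' = h^a ∘ g^b ∘ f^m (c)` for some
`a, b ∈ {0,1}` and `0 ≤ m ≤ n - 1`. -/
def EquivCol (n : ℕ) (c c' : ℕ → ℕ → Bool) : Prop :=
  ∃ (a b : Bool) (m : ℕ), m ≤ n - 1 ∧
    ∀ i j, 1 ≤ i → i < j → j ≤ n →
      c' i j = (if a then hT n else id) ((if b then gT n else id) ((fT n)^[m] c)) i j

/-- The position (starting from 1) of the entry `(i,l)` in the order associated to the
entry `(i,j)`: first all entries `(i,l')`, `i < l' < j`, with `c i l' ≠ c i j` in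
decreasing order of `l'`, then all entries with `c i l' = c i j` in increasing order. -/
def orderPos (c : ℕ → ℕ → Bool) (i j l : ℕ) : ℕ :=
  if c i l ≠ c i j then
    ((Finset.Ioo i j).filter (fun l' => l ≤ l' ∧ c i l' ≠ c i j)).card
  else
    ((Finset.Ioo i j).filter (fun l' => c i l' ≠ c i j)).card +
    ((Finset.Ioo i j).filter (fun l' => l' ≤ l ∧ c i l' = c i j)).card

/-- The edge `(i,j)` (with `i < j`) is crossed by some other edge of the drawing. -/
def Crossed (n : ℕ) (c : ℕ → ℕ → Bool) (i j : ℕ) : Prop :=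
  ∃ k l, 1 ≤ k ∧ k < l ∧ l ≤ n ∧
    ((i < k ∧ k < j ∧ j < l ∧ c i j = c k l) ∨
     (k < i ∧ i < l ∧ l < j ∧ c i j = c k l))


/-! ### Auxiliary lemmas for `Eleqleq_recursion` -/

open Finset in
private lemma aux_sum_eq_ind (v m : ℕ) :
    ∑ j ∈ Finset.range m, (if v = j then (1:ℕ) else 0) = if v < m then 1 else 0 := by
  induction m with
  | zero => simp
  | succ m ih => rw [Finset.sum_range_succ, ih]; split <;> split <;> split <;> omega

private lemma aux_sum_le_ind (v m : ℕ) :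
    ∑ j ∈ Finset.range m, (if v ≤ j then (1:ℕ) else 0) = m - v := by
  induction m with
  | zero => simp
  | succ m ih => rw [Finset.sum_range_succ, ih]; split <;> omega

private lemma aux_Eleq_sum (n j : ℕ) (c : ℕ → ℕ → Bool) :
    Eleq n c j =
      ∑ p ∈ ((Finset.Icc 1 n) ×ˢ (Finset.Icc 1 n)).filter (fun p => p.1 < p.2),
        (if kVal n c p.1 p.2 ≤ j then 1 else 0) := by
  unfold Eleq Ek
  simp only [Finset.card_filter]
  rw [Finset.sum_comm, Finset.sum_filter]
  refine Finset.sum_congr rfl (fun p _ => ?_)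
  by_cases h : p.1 < p.2
  · simp only [h, true_and, if_true]
    rw [aux_sum_eq_ind]
    have : kVal n c p.1 p.2 < j + 1 ↔ kVal n c p.1 p.2 ≤ j := by omega
    simp [this]
  · simp [h]

private lemma aux_sum_Eleq (n m : ℕ) (c : ℕ → ℕ → Bool) :
    ∑ j ∈ Finset.range m, Eleq n c j =
      ∑ p ∈ ((Finset.Icc 1 n) ×ˢ (Finset.Icc 1 n)).filter (fun p => p.1 < p.2),
        (m - kVal n c p.1 p.2) := by
  simp only [aux_Eleq_sum]
  rw [Finset.sum_comm]
  exact Finset.sum_congr rfl (fun p _ => aux_sum_le_ind _ _)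

private lemma aux_split_sum (n : ℕ) (hn : 2 ≤ n) (F : ℕ × ℕ → ℕ) :
    ∑ p ∈ ((Finset.Icc 1 n) ×ˢ (Finset.Icc 1 n)).filter (fun p => p.1 < p.2), F p =
      (∑ p ∈ ((Finset.Icc 1 (n-1)) ×ˢ (Finset.Icc 1 (n-1))).filter (fun p => p.1 < p.2), F p) +
      ∑ i ∈ Finset.Icc 1 (n-1), F (i, n) := by
  rw [← Finset.sum_filter_add_sum_filter_not
    (((Finset.Icc 1 n) ×ˢ (Finset.Icc 1 n)).filter (fun p => p.1 < p.2)) (fun p => p.2 = n)]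
  rw [add_comm]
  congr 1
  · apply Finset.sum_congr _ (fun p _ => rfl)
    ext p
    simp only [Finset.filter_filter, Finset.mem_filter, Finset.mem_product, Finset.mem_Icc]
    omega
  · have h2 : (((Finset.Icc 1 n) ×ˢ (Finset.Icc 1 n)).filter (fun p => p.1 < p.2)).filter
        (fun p => p.2 = n) = (Finset.Icc 1 (n-1)).image (fun i => (i, n)) := by
      ext p
      simp only [Finset.filter_filter, Finset.mem_filter, Finset.mem_product, Finset.mem_Icc,
        Finset.mem_image, Prod.ext_iff]
      constructor
      · rintro ⟨⟨⟨h1, h2⟩, h3, h4⟩, h5, h6⟩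
        exact ⟨p.1, by omega, by omega, by omega⟩
      · rintro ⟨a, ha, rfl, rfl⟩
        omega
    rw [h2, Finset.sum_image (fun a _ b _ h => by simpa using (Prod.ext_iff.1 h).1)]

private lemma aux_sDeg_restrict (n : ℕ) (c : ℕ → ℕ → Bool) (i j : ℕ) (hn : 1 ≤ n)
    (hj : j ≤ n - 1) :
    sDeg n c i j = sDeg (n-1) c i j + (if c i n = c i j then 1 else 0) := by
  unfold sDeg
  have h : Finset.Ioc j n = insert n (Finset.Ioc j (n-1)) := by
    ext l; simp only [Finset.mem_Ioc, Finset.mem_insert]; omega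
  rw [h, Finset.filter_insert]
  have hnm : n ∉ (Finset.Ioc j (n-1)).filter (fun l => c i l = c i j) := by
    simp only [Finset.mem_filter, Finset.mem_Ioc]; omega
  split
  · rw [Finset.card_insert_of_notMem hnm]; omega
  · omega

private lemma aux_kVal_bounds (n : ℕ) (c : ℕ → ℕ → Bool) (i j : ℕ) (hn : 1 ≤ n)
    (hj : j ≤ n - 1) :
    kVal (n-1) c i j ≤ kVal n c i j ∧ kVal n c i j ≤ kVal (n-1) c i j + 1 := by
  unfold kVal
  rw [aux_sDeg_restrict n c i j hn hj]
  split <;> omega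

private lemma aux_sum_count (g : ℕ → ℕ) (B : Finset ℕ) :
    ∑ i ∈ B, g ((B.filter (fun x => x < i)).card) = ∑ t ∈ Finset.range B.card, g t := by
  induction B using Finset.induction_on_max with
  | empty => simp
  | insert a s ha ih =>
    have hna : a ∉ s := fun h => absurd (ha a h) (lt_irrefl a)
    rw [Finset.sum_insert hna, Finset.card_insert_of_notMem hna, Finset.sum_range_succ]
    have h1 : ((insert a s).filter (fun x => x < a)) = s := by
      rw [Finset.filter_insert]
      simp only [lt_irrefl, if_false]
      exact Finset.filter_true_of_mem ha
    have h2 : ∀ i ∈ s, ((insert a s).filter (fun x => x < i)).card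
        = (s.filter (fun x => x < i)).card := by
      intro i hi
      rw [Finset.filter_insert, if_neg (by exact fun h => absurd (ha i hi) (by omega))]
    rw [h1, Finset.sum_congr rfl (fun i hi => by rw [h2 i hi]), ih]
    omega

private lemma aux_gauss (K : ℕ) : ∀ m, K ≤ m →
    (∑ t ∈ Finset.range m, (K - t)) * 2 = K * (K + 1) := by
  intro m hm
  obtain ⟨d, rfl⟩ := Nat.exists_eq_add_of_le hm
  induction d with
  | zero =>
    simp only [Nat.add_zero]
    rw [← Finset.sum_range_reflect]
    have h1 : ∀ j ∈ Finset.range K, K - (K - 1 - j) = j + 1 := fun j hj => by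
      have := Finset.mem_range.1 hj; omega
    rw [Finset.sum_congr rfl h1]
    have h2 : ∑ j ∈ Finset.range K, (j + 1) = (∑ j ∈ Finset.range K, j) + K := by
      rw [Finset.sum_add_distrib]; simp
    rw [h2, add_mul, Finset.sum_range_id_mul_two]
    cases K with
    | zero => simp
    | succ k => simp only [Nat.succ_sub_one]; ring
  | succ d ih =>
    rw [← Nat.add_assoc, Finset.sum_range_succ]
    have h0 : K - (K + d) = 0 := by omega
    rw [h0, Nat.add_zero]
    exact ih (by omega)

private lemma aux_two_sum (n b r k : ℕ) (hbr : b + r = n - 1) (hn : 2*k + 4 ≤ n) :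
    (∑ t ∈ Finset.range b, (k + 1 - min t (n - 2 - t))) +
    (∑ t ∈ Finset.range r, (k + 1 - min t (n - 2 - t))) = (k+1) * (k+2) := by
  have key : ∀ m w, m + w = n - 1 →
      ∑ t ∈ Finset.range m, (k + 1 - min t (n - 2 - t)) =
        (∑ t ∈ Finset.range m, (k + 1 - t)) + ∑ t ∈ Finset.range m, (k + 1 - (w + t)) := by
    intro m w hmw
    rw [← Finset.sum_range_reflect (fun t => k + 1 - (w + t)) m, ← Finset.sum_add_distrib]
    refine Finset.sum_congr rfl (fun t ht => ?_)
    have := Finset.mem_range.1 ht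
    omega
  rw [key b r hbr, key r b (by omega)]
  have comb : ∀ m w, m + w = n - 1 →
      (∑ t ∈ Finset.range m, (k + 1 - t)) + (∑ t ∈ Finset.range w, (k + 1 - (m + t)))
        = ∑ t ∈ Finset.range (n-1), (k + 1 - t) := by
    intro m w hmw
    rw [← hmw, Finset.sum_range_add]
  have g : (∑ t ∈ Finset.range (n-1), (k + 1 - t)) * 2 = (k+1) * (k+2) :=
    aux_gauss (k+1) (n-1) (by omega)
  have h1 := comb b r hbr
  have h2 := comb r b (by omega)
  omega

private lemma aux_vertexn_sum (n k : ℕ) (c : ℕ → ℕ → Bool) (hn : 2*k + 4 ≤ n) :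
    ∑ i ∈ Finset.Icc 1 (n-1), (k + 1 - kVal n c i n) = (k+1) * (k+2) := by
  have hs : ∀ i, sDeg n c i n = ((Finset.Ico 1 i).filter (fun l => c l n = c i n)).card := by
    intro i; unfold sDeg; simp
  rw [← Finset.sum_filter_add_sum_filter_not (Finset.Icc 1 (n-1)) (fun i => c i n = true)]
  set B := (Finset.Icc 1 (n-1)).filter (fun i => c i n = true) with hB
  set R := (Finset.Icc 1 (n-1)).filter (fun i => ¬ c i n = true) with hR
  have hcard : B.card + R.card = n - 1 := by
    rw [hB, hR, Finset.card_filter_add_card_filter_not, Nat.card_Icc]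
    omega
  have hBsum : ∑ i ∈ B, (k + 1 - kVal n c i n)
      = ∑ t ∈ Finset.range B.card, (k + 1 - min t (n - 2 - t)) := by
    rw [← aux_sum_count (fun t => k + 1 - min t (n - 2 - t)) B]
    refine Finset.sum_congr rfl (fun i hi => ?_)
    have hmem := Finset.mem_filter.1 hi
    have hi1 : 1 ≤ i ∧ i ≤ n - 1 := Finset.mem_Icc.1 hmem.1
    have hci : c i n = true := hmem.2
    have hfe : (Finset.Ico 1 i).filter (fun l => c l n = c i n) = B.filter (fun x => x < i) := by
      rw [hB, Finset.filter_filter]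
      ext l
      simp only [Finset.mem_filter, Finset.mem_Ico, Finset.mem_Icc, hci]
      constructor
      · rintro ⟨⟨h1, h2⟩, h3⟩; exact ⟨⟨h1, by omega⟩, h3, h2⟩
      · rintro ⟨⟨h1, h2⟩, h3, h4⟩; exact ⟨⟨h1, h4⟩, h3⟩
    unfold kVal
    rw [hs i, hfe]
  have hRsum : ∑ i ∈ R, (k + 1 - kVal n c i n)
      = ∑ t ∈ Finset.range R.card, (k + 1 - min t (n - 2 - t)) := by
    rw [← aux_sum_count (fun t => k + 1 - min t (n - 2 - t)) R]
    refine Finset.sum_congr rfl (fun i hi => ?_)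
    have hmem := Finset.mem_filter.1 hi
    have hi1 : 1 ≤ i ∧ i ≤ n - 1 := Finset.mem_Icc.1 hmem.1
    have hci : c i n = false := by
      have := hmem.2; revert this; cases c i n <;> simp
    have hfe : (Finset.Ico 1 i).filter (fun l => c l n = c i n) = R.filter (fun x => x < i) := by
      rw [hR, Finset.filter_filter]
      ext l
      simp only [Finset.mem_filter, Finset.mem_Ico, Finset.mem_Icc, hci, Bool.not_eq_true]
      constructor
      · rintro ⟨⟨h1, h2⟩, h3⟩; exact ⟨⟨h1, by omega⟩, h3, h2⟩
      · rintro ⟨⟨h1, h2⟩, h3, h4⟩; exact ⟨⟨h1, h4⟩, h3⟩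
    unfold kVal
    rw [hs i, hfe]
  rw [hBsum, hRsum]
  exact aux_two_sum n B.card R.card k hcard hn
theorem Eleqleq_recursion (n k : ℕ) (hn : 4 ≤ n) (hk : k ≤ n / 2 - 2)
    (c : ℕ → ℕ → Bool) :
    Eleqleq n c k =
      (∑ j ∈ Finset.range k, Eleq (n - 1) c j) + 2 * (k + 2).choose 2 + EleqInv n c k := by
  have h2k : 2 * k + 4 ≤ n := by omega
  have hch : 2 * (k + 2).choose 2 = (k + 1) * (k + 2) := by
    rw [Nat.choose_two_right]
    have e : (k + 2) * (k + 2 - 1) = (k + 1) * (k + 2) := by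
      rw [show k + 2 - 1 = k + 1 from by omega]
      ring
    rw [e]
    obtain ⟨t, ht⟩ := Nat.even_mul_succ_self (k + 1)
    have ht' : (k + 1) * (k + 2) = 2 * t := by
      rw [show k + 1 + 1 = k + 2 from by omega] at ht
      omega
    rw [ht']
    omega
  have lhs : Eleqleq n c k =
      ∑ p ∈ ((Finset.Icc 1 n) ×ˢ (Finset.Icc 1 n)).filter (fun p => p.1 < p.2),
        (k + 1 - kVal n c p.1 p.2) := by
    unfold Eleqleq
    exact aux_sum_Eleq n (k+1) c
  rw [lhs, aux_split_sum n (by omega) (fun p => k + 1 - kVal n c p.1 p.2)]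
  have hvtx : ∑ i ∈ Finset.Icc 1 (n-1),
      (fun p : ℕ × ℕ => k + 1 - kVal n c p.1 p.2) (i, n) = (k+1) * (k+2) :=
    aux_vertexn_sum n k c h2k
  rw [hvtx]
  have hinv : EleqInv n c k =
      ∑ p ∈ ((Finset.Icc 1 (n-1)) ×ˢ (Finset.Icc 1 (n-1))).filter (fun p => p.1 < p.2),
        (if kVal n c p.1 p.2 = kVal (n-1) c p.1 p.2 ∧ kVal n c p.1 p.2 ≤ k then 1 else 0) := by
    unfold EleqInv
    rw [Finset.card_filter, Finset.sum_filter]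
    refine Finset.sum_congr rfl (fun p _ => ?_)
    by_cases h : p.1 < p.2 <;> simp [h]
  have edge : ∑ p ∈ ((Finset.Icc 1 (n-1)) ×ˢ (Finset.Icc 1 (n-1))).filter (fun p => p.1 < p.2),
        (k + 1 - kVal n c p.1 p.2)
      = (∑ j ∈ Finset.range k, Eleq (n - 1) c j) + EleqInv n c k := by
    rw [aux_sum_Eleq (n-1) k c, hinv, ← Finset.sum_add_distrib]
    refine Finset.sum_congr rfl (fun p hp => ?_)
    have hm := Finset.mem_filter.1 hp
    have hp2 : p.2 ≤ n - 1 := (Finset.mem_Icc.1 (Finset.mem_product.1 hm.1).2).2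
    have hb := aux_kVal_bounds n c p.1 p.2 (by omega) hp2
    split <;> omega
  rw [edge, hch]
  ring
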